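/- Let A and B be backward weighted shift operators on a Hilbert space H with weight sequences {a_i}_{i≥0} and {b_i}_{i≥0}. If a bounded operator X satisfies AX = XB, then with respect to the orthonormal basis {e_i}, the matrix entries x_{i,j} = ⟨X e_j, e_i⟩ satisfy x_{i,j} = 0 whenever i > j (i.e., X is upper triangular). -/

import Mathlib

/-- Let `A`, `B` be backward weighted shifts on `H` with (nonzero) weight
sequences `a`, `b`. If a bounded operator `X` satisfies `A X = X B`, then the matrix entries
`x_{i,j} = ⟨X e_j, e_i⟩` vanish whenever `i > j`, i.e. `X` is upper triangular. -/
theorem stmt1 {H : Type*} [NormedAddCommGroup H] [InnerProductSpace ℂ H] [CompleteSpace H]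
    (e : ℕ → H) (he : Orthonormal ℂ e)
    (hdense : (Submodule.span ℂ (Set.range e)).topologicalClosure = ⊤)
    (a b : ℕ → ℂ) (ha : ∀ i, a i ≠ 0) (hb : ∀ i, b i ≠ 0)
    (A B X : H →L[ℂ] H)
    (hA0 : A (e 0) = 0) (hA : ∀ i, A (e (i + 1)) = a i • e i)
    (hB0 : B (e 0) = 0) (hB : ∀ i, B (e (i + 1)) = b i • e i)
    (hX : A ∘L X = X ∘L B) :
    ∀ i j : ℕ, j < i → (inner ℂ (e i) (X (e j)) : ℂ) = 0 := by
  have hd : Dense (Submodule.span ℂ (Set.range e) : Set H) := by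
    rwa [Submodule.dense_iff_topologicalClosure_eq_top]
  -- key adjoint identity: ⟨e i, A y⟩ = a i * ⟨e (i+1), y⟩
  have key : ∀ (i : ℕ) (y : H), (inner ℂ (e i) (A y) : ℂ) = a i * inner ℂ (e (i + 1)) y := by
    intro i
    have : (innerSL ℂ (e i)).comp A = a i • innerSL ℂ (e (i + 1)) := by
      apply ContinuousLinearMap.ext_on hd
      rintro _ ⟨k, rfl⟩
      cases k with
      | zero =>
          simp [hA0, he.inner_left_right_finset, orthonormal_iff_ite.mp he]
      | succ k =>
          simp only [ContinuousLinearMap.comp_apply, ContinuousLinearMap.smul_apply,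
            innerSL_apply_apply, hA k, inner_smul_right]
          rw [orthonormal_iff_ite.mp he, orthonormal_iff_ite.mp he]
          by_cases h : i = k <;> simp [h]
    intro y
    have := congrFun (congrArg DFunLike.coe this) y
    simpa using this
  have hXB : ∀ v, A (X v) = X (B v) := fun v =>
    congrFun (congrArg DFunLike.coe hX) v
  intro i j
  induction j generalizing i with
  | zero =>
      intro hi
      obtain ⟨i', rfl⟩ : ∃ i', i = i' + 1 := ⟨i - 1, by omega⟩
      have h0 : A (X (e 0)) = 0 := by rw [hXB, hB0, map_zero]
      have := key i' (X (e 0))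
      rw [h0, inner_zero_right] at this
      exact (mul_eq_zero.mp this.symm).resolve_left (ha i')
  | succ j ih =>
      intro hi
      obtain ⟨i', rfl⟩ : ∃ i', i = i' + 1 := ⟨i - 1, by omega⟩
      have h1 : A (X (e (j + 1))) = b j • X (e j) := by
        rw [hXB, hB j, map_smul]
      have := key i' (X (e (j + 1)))
      rw [h1, inner_smul_right, ih i' (by omega), mul_zero] at this
      exact (mul_eq_zero.mp this.symm).resolve_left (ha i')
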